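/- Let K be an ideal of K[[x,y_1,...,y_{n−1}]] of finite order c ≥ 1, and V = {x = 0} a hypersurface of weak maximal contact with K. Then the coefficient ideal coeff_V K is the zero ideal if and only if K is bold regular (K = (x')^c for some parameter x' with V = {x'=0}, i.e., K is a power of a regular principal ideal whose support is V) or K = (1). -/

import Mathlib

noncomputable section

set_option synthInstance.maxHeartbeats 1000000
set_option maxHeartbeats 1000000

variable {Kf : Type*} [Field Kf] {m : ℕ}

/-- `K[[x, y_1, ..., y_{n-1}]]` viewed as power series in `x` over `A = K[[y]]`. -/
abbrev PS (Kf : Type*) [Field Kf] (m : ℕ) := PowerSeries (MvPowerSeries (Fin m) Kf)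

/-- The total order of `h = Σ_j a_j(y) x^j`: `min_j (j + ord a_j)`. -/
def ordT (h : PS Kf m) : ℕ∞ :=
  ⨅ j : ℕ, ((j : ℕ∞) +
    MvPowerSeries.order (PowerSeries.coeff (R := MvPowerSeries (Fin m) Kf) j h))

/-- The order of an ideal of `K[[x,y]]`. -/
def ordTI (I : Ideal (PS Kf m)) : ℕ∞ := ⨅ f : I, ordT (f : PS Kf m)

/-- The order of an ideal of `A = K[[y]]`. -/
def ordAI (J : Ideal (MvPowerSeries (Fin m) Kf)) : ℕ∞ :=
  ⨅ a : J, MvPowerSeries.order (a : MvPowerSeries (Fin m) Kf)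

/-- The coefficient ideal of an ideal `I` of `K[[x,y]]` with respect to `V = {x=0}` and
control `c`: `coeff_V I = Σ_{f∈I} Σ_{j<c} (a_{f,j})^{c!/(c−j)}`. -/
def coeffIdealPS (I : Ideal (PS Kf m)) (c : ℕ) : Ideal (MvPowerSeries (Fin m) Kf) :=
  ⨆ f : I, ∑ j ∈ Finset.range c,
    Ideal.span {PowerSeries.coeff (R := MvPowerSeries (Fin m) Kf) j (f : PS Kf m)} ^
      (Nat.factorial c / (c - j))

/-- Let `I` be an ideal of `K[[x,y]]` of finite order `c ≥ 1` and suppose `V = {x=0}`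
has weak maximal contact with `I` (it maximizes the order of the coefficient ideal
over all coordinate changes).  Then `coeff_V I = 0` if and only if `I` is bold regular
with support `V` (`I = (x)^c`) or `I = (1)`. -/
theorem coeffIdeal_eq_bot_iff (I : Ideal (PS Kf m)) (c : ℕ) (hc : 1 ≤ c)
    (hord : ordTI I = c)
    (hwmc : ∀ σ : PS Kf m ≃+* PS Kf m,
      ordAI (coeffIdealPS (Ideal.map σ.toRingHom I) c) ≤ ordAI (coeffIdealPS I c)) :
    coeffIdealPS I c = ⊥ ↔
      (I = Ideal.span {PowerSeries.X} ^ c ∨ I = ⊤) := by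
  classical
  constructor
  · intro hbot
    left
    -- all coefficients a_{f,j} with j < c vanish
    have hvan : ∀ f ∈ I, ∀ j < c,
        PowerSeries.coeff (R := MvPowerSeries (Fin m) Kf) j f = 0 := by
      intro f hf j hj
      have hle : (∑ k ∈ Finset.range c,
          Ideal.span {PowerSeries.coeff (R := MvPowerSeries (Fin m) Kf) k f} ^
            (Nat.factorial c / (c - k))) ≤ coeffIdealPS I c :=
        le_iSup (fun g : I => ∑ k ∈ Finset.range c,
          Ideal.span {PowerSeries.coeff (R := MvPowerSeries (Fin m) Kf) k (g : PS Kf m)} ^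
            (Nat.factorial c / (c - k))) ⟨f, hf⟩
      rw [hbot, le_bot_iff] at hle
      have hterm : Ideal.span {PowerSeries.coeff (R := MvPowerSeries (Fin m) Kf) j f} ^
          (Nat.factorial c / (c - j)) = ⊥ := by
        have h1 := Finset.single_le_sum
          (f := fun k => Ideal.span {PowerSeries.coeff (R := MvPowerSeries (Fin m) Kf) k f} ^
            (Nat.factorial c / (c - k))) (fun k _ => bot_le) (Finset.mem_range.mpr hj)
        rw [hle] at h1
        exact le_bot_iff.mp h1
      have hpos : 0 < Nat.factorial c / (c - j) :=
        Nat.div_pos (le_trans (by omega) (Nat.self_le_factorial c)) (by omega)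
      rw [Ideal.span_singleton_pow, Ideal.span_singleton_eq_bot] at hterm
      exact (pow_eq_zero_iff hpos.ne').mp hterm
    -- I ⊆ (X)^c
    have hsub : I ≤ Ideal.span {(PowerSeries.X : PS Kf m)} ^ c := by
      rw [Ideal.span_singleton_pow]
      intro f hf
      rw [Ideal.mem_span_singleton]
      exact PowerSeries.X_pow_dvd_iff.mpr (fun k hk => hvan f hf k hk)
    -- find a witness of order exactly c
    have hlt : ordTI I < (c : ℕ∞) + 1 := by
      rw [hord]
      exact (ENat.lt_add_one_iff (by simp)).mpr le_rfl
    rw [ordTI] at hlt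
    obtain ⟨⟨f, hf⟩, hfo⟩ := iInf_lt_iff.mp hlt
    rw [ordT] at hfo
    obtain ⟨j, hj⟩ := iInf_lt_iff.mp hfo
    have hjc : ¬ j < c := by
      intro hjlt
      rw [hvan f hf j hjlt] at hj
      simp at hj
    have hjlec : j ≤ c := by
      have : (j : ℕ∞) < (c : ℕ∞) + 1 :=
        lt_of_le_of_lt (le_add_right le_rfl) hj
      exact_mod_cast ENat.lt_add_one_iff (by simp) |>.mp this
    have hjeq : j = c := le_antisymm hjlec (not_lt.mp hjc)
    rw [hjeq] at hj
    set a := PowerSeries.coeff (R := MvPowerSeries (Fin m) Kf) c f with ha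
    have haord : MvPowerSeries.order a = 0 := by
      have h2 : MvPowerSeries.order a < 1 := by
        have := (WithTop.add_lt_add_iff_left (x := (c : ℕ∞))
          (by simp : (c : ℕ∞) ≠ ⊤)).mp hj
        exact this
      exact ENat.lt_one_iff_eq_zero.mp h2
    -- a has nonzero constant coefficient hence is a unit
    have hconst : MvPowerSeries.constantCoeff a ≠ 0 := by
      obtain ⟨⟨d, hd, hdeg⟩, -⟩ :=
        (MvPowerSeries.order_eq_nat (n := 0)).mp (by exact_mod_cast haord)
      rw [Finsupp.degree_eq_zero_iff] at hdeg
      subst hdeg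
      rwa [MvPowerSeries.coeff_zero_eq_constantCoeff] at hd
    have haunit : IsUnit a := MvPowerSeries.isUnit_iff_constantCoeff.mpr
      (isUnit_iff_ne_zero.mpr hconst)
    -- f = X^c * g with g a unit
    obtain ⟨g, hg⟩ := PowerSeries.X_pow_dvd_iff.mpr
      (fun k hk => hvan f hf k hk)
    have hcg : PowerSeries.constantCoeff (R := MvPowerSeries (Fin m) Kf) g = a := by
      rw [ha, hg, ← PowerSeries.coeff_zero_eq_constantCoeff_apply]
      have := PowerSeries.coeff_X_pow_mul g c 0
      rw [zero_add] at this
      rw [this]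
    have hgunit : IsUnit g := PowerSeries.isUnit_iff_constantCoeff.mpr (hcg ▸ haunit)
    obtain ⟨u, hu⟩ := hgunit
    have hXc : (PowerSeries.X : PS Kf m) ^ c ∈ I := by
      have : (PowerSeries.X : PS Kf m) ^ c = f * ↑u⁻¹ := by
        rw [hg, ← hu, mul_assoc, Units.mul_inv, mul_one]
      rw [this]
      exact Ideal.mul_mem_right _ _ hf
    refine le_antisymm hsub ?_
    rw [Ideal.span_singleton_pow, Ideal.span_le, Set.singleton_subset_iff]
    exact hXc
  · rintro (rfl | rfl)
    · rw [coeffIdealPS, iSup_eq_bot]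
      rintro ⟨f, hf⟩
      rw [Ideal.span_singleton_pow, Ideal.mem_span_singleton] at hf
      apply Finset.sum_eq_zero
      intro k hk
      rw [Finset.mem_range] at hk
      have : PowerSeries.coeff (R := MvPowerSeries (Fin m) Kf) k f = 0 :=
        PowerSeries.X_pow_dvd_iff.mp hf k hk
      rw [this]
      have hpos : 0 < Nat.factorial c / (c - k) :=
        Nat.div_pos (le_trans (by omega) (Nat.self_le_factorial c)) (by omega)
      rw [Ideal.span_singleton_pow, zero_pow hpos.ne', Ideal.span_singleton_eq_bot.mpr rfl]
      rfl
    · exfalso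
      have h1 : ordTI (⊤ : Ideal (PS Kf m)) ≤ ordT (1 : PS Kf m) :=
        iInf_le _ (⟨1, trivial⟩ : (⊤ : Ideal (PS Kf m)))
      have h2 : ordT (1 : PS Kf m) ≤ 0 := by
        have h3 := iInf_le (fun j : ℕ => ((j : ℕ∞) + MvPowerSeries.order
          (PowerSeries.coeff (R := MvPowerSeries (Fin m) Kf) j (1 : PS Kf m)))) 0
        rw [ordT]
        refine le_trans h3 ?_
        have hc1 : PowerSeries.coeff (R := MvPowerSeries (Fin m) Kf) 0 (1 : PS Kf m) = 1 := by
          simp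
        rw [hc1]
        have : MvPowerSeries.order (1 : MvPowerSeries (Fin m) Kf) ≤ 0 := by
          have := MvPowerSeries.order_le (R := Kf) (d := 0)
            (f := (1 : MvPowerSeries (Fin m) Kf)) (by simp)
          simpa [map_zero] using this
        simpa using this
      rw [hord] at h1
      have : (c : ℕ∞) = 0 := le_antisymm (le_trans h1 h2) zero_le
      have : c = 0 := by exact_mod_cast this
      omega

end
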